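/- Let M₁ be a finite von Neumann algebra with trace τ, P a projection with τ(P) = 1/2, and T ∈ M₁ with ‖T‖ ≤ 1 written as a 2×2 operator matrix [[T₁₁, T₁₂],[T₂₁, T₂₂]] with respect to I = P + (I−P), where ‖T₂₁‖₂ < δ. Suppose Q ≥ I−P is a projection with ‖T₂₁Q‖ ≤ ε₁ and τ(I−Q) < ε₁²/δ². Write Q = P₁' + (I−P) with P₁' ≤ P, and set R = T₁₁P₁' + T₁₂ + T₂₂ (upper-triangular compression). Then ‖R‖ ≤ 1 + ε₁ and ‖R − T‖₂ ≤ ε₁/δ + δ, so S = (1+ε₁)^{-1}R satisfies ‖S‖ ≤ 1, SP = PSP, and ‖S − T‖₂ ≤ ε₁ + ε₁/δ + δ. -/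

import Mathlib

open scoped ComplexOrder

variable {H : Type*} [NormedAddCommGroup H] [InnerProductSpace ℂ H] [CompleteSpace H]

/-- The orthogonal projection (as an operator on `H`) onto a closed submodule. -/
noncomputable def projOnto (K : Submodule ℂ H) (hK : IsClosed (K : Set H)) : H →L[ℂ] H :=
  haveI : CompleteSpace K := hK.completeSpace_coe
  K.subtypeL ∘L K.orthogonalProjectionOnto

/-- `N(T)`: the projection onto the kernel of `T`. -/
noncomputable def kerProj (T : H →L[ℂ] H) : H →L[ℂ] H :=
  projOnto (LinearMap.ker (T : H →ₗ[ℂ] H)) (ContinuousLinearMap.isClosed_ker T)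

/-- `R(T)`: the projection onto the closure of the range of `T`. -/
noncomputable def rangeProj (T : H →L[ℂ] H) : H →L[ℂ] H :=
  projOnto (LinearMap.range (T : H →ₗ[ℂ] H)).topologicalClosure (Submodule.isClosed_topologicalClosure _)

/-- A (self-adjoint, idempotent) projection operator. -/
def IsProjection (p : H →L[ℂ] H) : Prop := IsSelfAdjoint p ∧ p * p = p

/-- `τ` is a faithful tracial state on the von Neumann algebra `M`. -/
structure IsFiniteTrace (M : VonNeumannAlgebra H) (τ : (H →L[ℂ] H) → ℂ) : Prop where
  map_one : τ 1 = 1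
  map_add : ∀ x y, τ (x + y) = τ x + τ y
  map_smul : ∀ (c : ℂ) (x : H →L[ℂ] H), τ (c • x) = c * τ x
  tracial : ∀ x ∈ M, ∀ y ∈ M, τ (x * y) = τ (y * x)
  nonneg : ∀ x ∈ M, 0 ≤ τ (star x * x)
  faithful : ∀ x ∈ M, τ (star x * x) = 0 → x = 0

/-- The trace 2-norm `‖x‖₂ = τ(x*x)^{1/2}`. -/
noncomputable def norm2 (τ : (H →L[ℂ] H) → ℂ) (x : H →L[ℂ] H) : ℝ :=
  Real.sqrt (τ (star x * x)).re

/-- `M` is a type II₁ factor with faithful normal tracial state `τ`: a factor whose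
trace takes a continuum of values on subprojections of any projection. -/
structure IsTypeII1Factor (M : VonNeumannAlgebra H) (τ : (H →L[ℂ] H) → ℂ) : Prop where
  trace : IsFiniteTrace M τ
  factor : ∀ z ∈ M, (∀ x ∈ M, z * x = x * z) → ∃ c : ℂ, z = c • (1 : H →L[ℂ] H)
  diffuse : ∀ p ∈ M, IsProjection p → ∀ t : ℝ, 0 ≤ t → t ≤ (τ p).re →
    ∃ q ∈ M, IsProjection q ∧ q * p = q ∧ τ q = (t : ℂ)

lemma isClosed_centralizer {A : Type*} [NormedRing A] (s : Set A) :
    IsClosed (Set.centralizer s) := by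
  have h : Set.centralizer s = ⋂ m ∈ s, {z | m * z = z * m} := by
    ext z; simp [Set.mem_centralizer_iff]
  rw [h]
  exact isClosed_biInter fun m _ =>
    isClosed_eq (continuous_mul_left m) (continuous_mul_right m)

lemma vn_isClosed (M : VonNeumannAlgebra H) : IsClosed (M : Set (H →L[ℂ] H)) := by
  rw [← M.centralizer_centralizer]
  exact isClosed_centralizer _

lemma cfc_mem_vn (M : VonNeumannAlgebra H) {a : H →L[ℂ] H} (haM : a ∈ M)
    [ha : IsStarNormal a] (f : ℂ → ℂ) : cfc f a ∈ M := by
  by_cases hf : ContinuousOn f (spectrum ℂ a)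
  · rw [cfc_apply f a ha hf, cfcHom_eq_of_isStarNormal]
    have hle : StarAlgebra.elemental ℂ a ≤ M.toStarSubalgebra :=
      StarAlgebra.elemental.le_of_mem (vn_isClosed M) haM
    exact hle (((continuousFunctionalCalculus a) ⟨_, hf.restrict⟩ : StarAlgebra.elemental ℂ a)).2
  · rw [cfc_apply_of_not_continuousOn a hf]
    exact zero_mem M.toStarSubalgebra

variable {M : VonNeumannAlgebra H} {τ : (H →L[ℂ] H) → ℂ}

lemma tau_map_neg (hτ : IsFiniteTrace M τ) (x : H →L[ℂ] H) : τ (-x) = - τ x := by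
  have := hτ.map_smul (-1) x; simpa using this

lemma tau_map_sub (hτ : IsFiniteTrace M τ) (x y : H →L[ℂ] H) : τ (x - y) = τ x - τ y := by
  rw [sub_eq_add_neg, hτ.map_add, tau_map_neg hτ]; ring

lemma vn_smul_mem {x : H →L[ℂ] H} (hx : x ∈ M) (c : ℂ) : c • x ∈ M := by
  rw [Algebra.smul_def]
  exact mul_mem (M.toStarSubalgebra.algebraMap_mem c) hx

lemma tau_nonneg_of_nonneg (hτ : IsFiniteTrace M τ) {a : H →L[ℂ] H} (haM : a ∈ M)
    (ha : 0 ≤ a) : 0 ≤ τ a := by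
  set f : ℂ → ℂ := fun z => ((Real.sqrt z.re : ℝ) : ℂ) with hf
  have hsa : IsSelfAdjoint a := IsSelfAdjoint.of_nonneg ha
  haveI hsn : IsStarNormal a := hsa.isStarNormal
  have hcont : Continuous f := Complex.continuous_ofReal.comp
    (Real.continuous_sqrt.comp Complex.continuous_re)
  have hmem : cfc f a ∈ M := cfc_mem_vn M haM f
  have hstar : star (cfc f a) = cfc f a := by
    rw [← cfc_star]
    refine cfc_congr fun z hz => ?_
    simp [hf, Complex.star_def, Complex.conj_ofReal]
  have hmul : cfc f a * cfc f a = a := by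
    rw [← cfc_mul f f a hcont.continuousOn hcont.continuousOn]
    have heq : (spectrum ℂ a).EqOn (fun z => f z * f z) id := by
      intro z hz
      have h0 : 0 ≤ z := spectrum_nonneg_of_nonneg ha hz
      rw [Complex.le_def] at h0
      have hre : 0 ≤ z.re := by simpa using h0.1
      have him : z.im = 0 := by simpa using h0.2.symm
      have : (Real.sqrt z.re) * (Real.sqrt z.re) = z.re := Real.mul_self_sqrt hre
      simp only [hf, id]
      rw [← Complex.ofReal_mul, this]
      exact Complex.ext (by simp) (by simp [him])
    rw [cfc_congr heq, cfc_id ℂ a]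
  calc (0:ℂ) ≤ τ (star (cfc f a) * cfc f a) := hτ.nonneg _ hmem
    _ = τ a := by rw [hstar, hmul]

lemma algebraMap_real_eq (r : ℝ) :
    algebraMap ℝ (H →L[ℂ] H) r = ((r : ℂ)) • 1 := by
  rw [Algebra.algebraMap_eq_smul_one, ← algebraMap_smul ℂ r (1 : H →L[ℂ] H)]
  norm_num

lemma tau_real_of_selfAdjoint (hτ : IsFiniteTrace M τ) {a : H →L[ℂ] H} (haM : a ∈ M)
    (hsa : IsSelfAdjoint a) : (τ a).im = 0 := by
  have h1 : 0 ≤ a + algebraMap ℝ (H →L[ℂ] H) ‖a‖ := by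
    have h := hsa.neg_algebraMap_norm_le_self
    have := add_le_add_right h (algebraMap ℝ (H →L[ℂ] H) ‖a‖)
    rw [add_comm]; simpa using this
  have hmem : a + algebraMap ℝ (H →L[ℂ] H) ‖a‖ ∈ M := by
    rw [algebraMap_real_eq]
    exact add_mem haM (vn_smul_mem (one_mem M.toStarSubalgebra) _)
  have h2 := tau_nonneg_of_nonneg hτ hmem h1
  rw [Complex.le_def] at h2
  have h3 : (τ (a + algebraMap ℝ (H →L[ℂ] H) ‖a‖)).im = 0 := by simpa using h2.2.symm
  rw [hτ.map_add, algebraMap_real_eq, hτ.map_smul] at h3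
  rw [hτ.map_one] at h3
  simpa using h3

lemma tau_star (hτ : IsFiniteTrace M τ) {a : H →L[ℂ] H} (haM : a ∈ M) :
    τ (star a) = starRingEnd ℂ (τ a) := by
  have hmem1 : a + star a ∈ M := add_mem haM (star_mem haM)
  have hmem2 : Complex.I • (a - star a) ∈ M :=
    vn_smul_mem (sub_mem haM (star_mem haM)) _
  have hsa1 : IsSelfAdjoint (a + star a) := by
    simp [IsSelfAdjoint, star_add, add_comm]
  have hsa2 : IsSelfAdjoint (Complex.I • (a - star a)) := by
    rw [IsSelfAdjoint, star_smul, star_sub, star_star, Complex.star_def, Complex.conj_I,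
      neg_smul, smul_sub, smul_sub]
    abel
  have h1 := tau_real_of_selfAdjoint hτ hmem1 hsa1
  have h2 := tau_real_of_selfAdjoint hτ hmem2 hsa2
  rw [hτ.map_add] at h1
  rw [hτ.map_smul, tau_map_sub hτ] at h2
  set u := τ a; set v := τ (star a)
  have e1 : u.im + v.im = 0 := by simpa using h1
  have e2 : u.re - v.re = 0 := by
    have : (Complex.I * (u - v)).im = u.re - v.re := by simp
    rw [h2] at this; linarith
  apply Complex.ext
  · simp; linarith
  · simp; linarith

lemma norm2_nonneg (τ : (H →L[ℂ] H) → ℂ) (x : H →L[ℂ] H) : 0 ≤ norm2 τ x :=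
  Real.sqrt_nonneg _

lemma tau_sq_nonneg (hτ : IsFiniteTrace M τ) {x : H →L[ℂ] H} (hx : x ∈ M) :
    0 ≤ (τ (star x * x)).re := by
  have := hτ.nonneg x hx; rw [Complex.le_def] at this; simpa using this.1

lemma tau_sq_im (hτ : IsFiniteTrace M τ) {x : H →L[ℂ] H} (hx : x ∈ M) :
    (τ (star x * x)).im = 0 := by
  have := hτ.nonneg x hx; rw [Complex.le_def] at this; simpa using this.2.symm

lemma norm2_sq (hτ : IsFiniteTrace M τ) {x : H →L[ℂ] H} (hx : x ∈ M) :
    norm2 τ x ^ 2 = (τ (star x * x)).re :=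
  Real.sq_sqrt (tau_sq_nonneg hτ hx)

lemma tau_CS (hτ : IsFiniteTrace M τ) {x y : H →L[ℂ] H} (hx : x ∈ M) (hy : y ∈ M) :
    (τ (star x * y)).re ≤ norm2 τ x * norm2 τ y := by
  set p := (τ (star x * x)).re with hp'
  set q := (τ (star y * y)).re with hq'
  set r := (τ (star x * y)).re with hr'
  have hp : 0 ≤ p := tau_sq_nonneg hτ hx
  have hq : 0 ≤ q := tau_sq_nonneg hτ hy
  have hsym : τ (star y * x) = starRingEnd ℂ (τ (star x * y)) := by
    have : star y * x = star (star x * y) := by simp [star_mul]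
    rw [this, tau_star hτ (mul_mem (star_mem hx) hy)]
  have key : ∀ t : ℝ, 0 ≤ p * t ^ 2 - 2 * r * t + q := by
    intro t
    set w := ((t : ℂ)) • x - y with hw
    have hwM : w ∈ M := sub_mem (vn_smul_mem hx _) hy
    have hsw : star w = ((t : ℂ)) • star x - star y := by
      rw [hw, star_sub, star_smul, Complex.star_def, Complex.conj_ofReal]
    have hexp : star w * w = ((t : ℂ) * t) • (star x * x) - (t : ℂ) • (star x * y)
        - (t : ℂ) • (star y * x) + star y * y := by
      rw [hsw, hw]
      simp only [sub_mul, mul_sub, smul_mul_assoc, mul_smul_comm, smul_smul]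
      module
    have h0 := hτ.nonneg w hwM
    rw [Complex.le_def] at h0
    have h1 : 0 ≤ (τ (star w * w)).re := by simpa using h0.1
    rw [hexp] at h1
    rw [hτ.map_add, tau_map_sub hτ, tau_map_sub hτ, hτ.map_smul, hτ.map_smul, hτ.map_smul,
      hsym] at h1
    have : (τ (star x * y)) = Complex.mk r (τ (star x * y)).im := by
      apply Complex.ext <;> simp [hr']
    simp only [Complex.add_re, Complex.sub_re, Complex.mul_re, Complex.ofReal_re,
      Complex.ofReal_im, Complex.conj_re, Complex.conj_im, Complex.mul_im] at h1
    nlinarith [h1]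
  by_cases hp0 : p = 0
  · have hr0 : r ≤ 0 := by
      by_contra hcon
      push_neg at hcon
      have := key ((q + 1) / (2 * r))
      rw [hp0] at this
      have h2 : 2 * r * ((q + 1) / (2 * r)) = q + 1 := by field_simp
      nlinarith
    calc r ≤ 0 := hr0
      _ ≤ norm2 τ x * norm2 τ y := mul_nonneg (norm2_nonneg τ x) (norm2_nonneg τ y)
  · have hppos : 0 < p := lt_of_le_of_ne hp (Ne.symm hp0)
    have := key (r / p)
    have hr2 : r ^ 2 ≤ p * q := by
      have h2 : p * (r / p) ^ 2 = r ^ 2 / p := by field_simp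
      have h3 : 2 * r * (r / p) = 2 * (r ^ 2 / p) := by field_simp
      rw [h2, h3] at this
      have := mul_le_mul_of_nonneg_right (by linarith : r ^ 2 / p ≤ q) hppos.le
      calc r ^ 2 = r ^ 2 / p * p := by field_simp
        _ ≤ q * p := this
        _ = p * q := mul_comm _ _
    calc r ≤ |r| := le_abs_self r
      _ = Real.sqrt (r ^ 2) := (Real.sqrt_sq_eq_abs r).symm
      _ ≤ Real.sqrt (p * q) := Real.sqrt_le_sqrt hr2
      _ = norm2 τ x * norm2 τ y := by
          rw [Real.sqrt_mul hp]; rfl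

lemma norm2_add_le (hτ : IsFiniteTrace M τ) {x y : H →L[ℂ] H} (hx : x ∈ M) (hy : y ∈ M) :
    norm2 τ (x + y) ≤ norm2 τ x + norm2 τ y := by
  have hsym : τ (star y * x) = starRingEnd ℂ (τ (star x * y)) := by
    have : star y * x = star (star x * y) := by simp [star_mul]
    rw [this, tau_star hτ (mul_mem (star_mem hx) hy)]
  have hexp : star (x + y) * (x + y) = star x * x + star x * y + star y * x + star y * y := by
    rw [star_add]; noncomm_ring
  have hre : (τ (star (x + y) * (x + y))).re
      = (τ (star x * x)).re + 2 * (τ (star x * y)).re + (τ (star y * y)).re := by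
    rw [hexp, hτ.map_add, hτ.map_add, hτ.map_add, hsym]
    simp [Complex.add_re]
    ring
  have hcs := tau_CS hτ hx hy
  have h1 : (τ (star (x + y) * (x + y))).re ≤ (norm2 τ x + norm2 τ y) ^ 2 := by
    rw [hre]
    have e1 := norm2_sq hτ hx
    have e2 := norm2_sq hτ hy
    nlinarith [hcs]
  calc norm2 τ (x + y) = Real.sqrt (τ (star (x + y) * (x + y))).re := rfl
    _ ≤ Real.sqrt ((norm2 τ x + norm2 τ y) ^ 2) := Real.sqrt_le_sqrt h1
    _ = norm2 τ x + norm2 τ y := by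
        rw [Real.sqrt_sq (add_nonneg (norm2_nonneg τ x) (norm2_nonneg τ y))]

lemma norm2_neg (τ : (H →L[ℂ] H) → ℂ) (x : H →L[ℂ] H) : norm2 τ (-x) = norm2 τ x := by
  unfold norm2; simp

lemma norm2_real_smul (hτ : IsFiniteTrace M τ) (r : ℝ) (x : H →L[ℂ] H) :
    norm2 τ (((r : ℂ)) • x) = |r| * norm2 τ x := by
  unfold norm2
  have : star (((r : ℂ)) • x) * (((r : ℂ)) • x) = ((r * r : ℝ) : ℂ) • (star x * x) := by
    rw [star_smul, Complex.star_def, Complex.conj_ofReal, smul_mul_assoc, mul_smul_comm,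
      smul_smul]
    norm_num
  rw [this, hτ.map_smul]
  have : (((r * r : ℝ) : ℂ) * τ (star x * x)).re = (r * r) * (τ (star x * x)).re := by
    simp [Complex.mul_re]
  rw [this, Real.sqrt_mul (mul_self_nonneg r), Real.sqrt_mul_self_eq_abs]

lemma norm2_mul_le (hτ : IsFiniteTrace M τ) {x y : H →L[ℂ] H} (hx : x ∈ M) (hy : y ∈ M) :
    norm2 τ (x * y) ≤ ‖x‖ * norm2 τ y := by
  set d : H →L[ℂ] H := algebraMap ℝ _ (‖x‖ * ‖x‖) - star x * x with hd
  have hdpos : 0 ≤ d := by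
    have h1 : star x * x ≤ algebraMap ℝ _ ‖star x * x‖ :=
      IsSelfAdjoint.le_algebraMap_norm_self (IsSelfAdjoint.star_mul_self x)
    rw [CStarRing.norm_star_mul_self] at h1
    rw [hd, sub_nonneg]
    exact h1
  have hdM : d ∈ M := by
    rw [hd, algebraMap_real_eq]
    exact sub_mem (vn_smul_mem (one_mem M.toStarSubalgebra) _) (mul_mem (star_mem hx) hx)
  have hconj : 0 ≤ star y * d * y := star_left_conjugate_nonneg hdpos y
  have hconjM : star y * d * y ∈ M := mul_mem (mul_mem (star_mem hy) hdM) hy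
  have h2 := tau_nonneg_of_nonneg hτ hconjM hconj
  have hexp : star y * d * y = ((‖x‖ * ‖x‖ : ℝ) : ℂ) • (star y * y)
      - star (x * y) * (x * y) := by
    rw [hd, algebraMap_real_eq, star_mul]
    simp only [sub_mul, mul_sub, smul_mul_assoc, mul_smul_comm, mul_one]
    noncomm_ring
  rw [Complex.le_def] at h2
  have h3 : 0 ≤ (τ (star y * d * y)).re := by simpa using h2.1
  rw [hexp, tau_map_sub hτ, hτ.map_smul] at h3
  have h4 : (τ (star (x * y) * (x * y))).re ≤ (‖x‖ * ‖x‖) * (τ (star y * y)).re := by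
    have : (((‖x‖ * ‖x‖ : ℝ) : ℂ) * τ (star y * y)).re
        = (‖x‖ * ‖x‖) * (τ (star y * y)).re := by simp [Complex.mul_re]
    rw [Complex.sub_re, this] at h3
    linarith
  calc norm2 τ (x * y) = Real.sqrt (τ (star (x * y) * (x * y))).re := rfl
    _ ≤ Real.sqrt ((‖x‖ * ‖x‖) * (τ (star y * y)).re) := Real.sqrt_le_sqrt h4
    _ = ‖x‖ * norm2 τ y := by
        rw [Real.sqrt_mul (mul_self_nonneg ‖x‖), Real.sqrt_mul_self (norm_nonneg x)]; rfl

lemma norm2_le_norm (hτ : IsFiniteTrace M τ) {x : H →L[ℂ] H} (hx : x ∈ M) :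
    norm2 τ x ≤ ‖x‖ := by
  have h1 : norm2 τ (x * 1) ≤ ‖x‖ * norm2 τ 1 :=
    norm2_mul_le hτ hx (one_mem M.toStarSubalgebra)
  rw [mul_one] at h1
  have h2 : norm2 τ (1 : H →L[ℂ] H) = 1 := by
    unfold norm2
    simp [hτ.map_one]
  rw [h2, mul_one] at h1
  exact h1

lemma proj_norm_le_one {p : H →L[ℂ] H} (hp : IsProjection p) : ‖p‖ ≤ 1 := by
  have h := CStarRing.norm_star_mul_self (x := p)
  rw [hp.1.star_eq, hp.2] at h
  nlinarith [norm_nonneg p]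

set_option maxHeartbeats 1000000 in
/-- The key perturbation estimate in the proof of Lemma 3.4: with
`T₂₁ = (I−P)TP`, `Q ≥ I−P`, `P₁' = Q − (I−P)`, and the upper-triangular compression
`R = T₁₁P₁' + T₁₂ + T₂₂`, one has `‖R‖ ≤ 1 + ε₁`, `‖R − T‖₂ ≤ ε₁/δ + δ`, and
`S = (1+ε₁)⁻¹R` satisfies `‖S‖ ≤ 1`, `SP = PSP`, `‖S − T‖₂ ≤ ε₁ + ε₁/δ + δ`. -/
theorem stmt_19 {H : Type*} [NormedAddCommGroup H] [InnerProductSpace ℂ H] [CompleteSpace H]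
    (M₁ : VonNeumannAlgebra H) (τ : (H →L[ℂ] H) → ℂ) (hτ : IsFiniteTrace M₁ τ)
    (P : H →L[ℂ] H) (hP : P ∈ M₁) (hPproj : IsProjection P) (hPhalf : τ P = (1 : ℂ) / 2)
    (T : H →L[ℂ] H) (hT : T ∈ M₁) (hT1 : ‖T‖ ≤ 1)
    (δ ε₁ : ℝ) (hδ : 0 < δ) (hε₁ : 0 < ε₁)
    (h21 : norm2 τ ((1 - P) * T * P) < δ)
    (Q : H →L[ℂ] H) (hQ : Q ∈ M₁) (hQproj : IsProjection Q)
    (hQge : Q * (1 - P) = 1 - P)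
    (hQnorm : ‖((1 - P) * T * P) * Q‖ ≤ ε₁)
    (hQtr : (τ (1 - Q)).re < ε₁ ^ 2 / δ ^ 2) :
    ‖(P * T * P) * (Q - (1 - P)) + P * T * (1 - P) + (1 - P) * T * (1 - P)‖ ≤ 1 + ε₁ ∧
    norm2 τ (((P * T * P) * (Q - (1 - P)) + P * T * (1 - P) + (1 - P) * T * (1 - P)) - T)
      ≤ ε₁ / δ + δ ∧
    (‖(1 + ε₁)⁻¹ •
        ((P * T * P) * (Q - (1 - P)) + P * T * (1 - P) + (1 - P) * T * (1 - P))‖ ≤ 1 ∧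
      ((1 + ε₁)⁻¹ •
          ((P * T * P) * (Q - (1 - P)) + P * T * (1 - P) + (1 - P) * T * (1 - P))) * P =
        P * ((1 + ε₁)⁻¹ •
          ((P * T * P) * (Q - (1 - P)) + P * T * (1 - P) + (1 - P) * T * (1 - P))) * P ∧
      norm2 τ ((1 + ε₁)⁻¹ •
          ((P * T * P) * (Q - (1 - P)) + P * T * (1 - P) + (1 - P) * T * (1 - P)) - T)
        ≤ ε₁ + ε₁ / δ + δ) := by
  have hPP : P * P = P := hPproj.2
  have hPsa : star P = P := hPproj.1.star_eq
  have hQQ : Q * Q = Q := hQproj.2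
  have hQsa : star Q = Q := hQproj.1.star_eq
  set R : H →L[ℂ] H :=
    (P * T * P) * (Q - (1 - P)) + P * T * (1 - P) + (1 - P) * T * (1 - P) with hRdef
  -- basic relations
  have hQ1 : (1 - P) * Q = 1 - P := by
    have h := congrArg star hQge
    rw [star_mul, star_sub, star_one, hPsa, hQsa] at h
    exact h
  have hPQ : P * Q = Q - (1 - P) := by
    have h : Q - P * Q = 1 - P := by
      calc Q - P * Q = (1 - P) * Q := by noncomm_ring
        _ = 1 - P := hQ1
    calc P * Q = Q - (Q - P * Q) := by abel
      _ = Q - (1 - P) := by rw [h]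
  have hQP : Q * P = Q - (1 - P) := by
    have h : Q - Q * P = 1 - P := by
      calc Q - Q * P = Q * (1 - P) := by noncomm_ring
        _ = 1 - P := hQge
    calc Q * P = Q - (Q - Q * P) := by abel
      _ = Q - (1 - P) := by rw [h]
  have k1 : P * T * P * (Q - (1 - P)) = P * T * P * Q := by
    rw [← hPQ]
    calc P * T * P * (P * Q) = P * T * (P * P) * Q := by noncomm_ring
      _ = P * T * P * Q := by rw [hPP]
  have claim1 : R = T * Q - ((1 - P) * T * P) * Q := by
    rw [hRdef, k1]
    have k2 : T * Q - ((1 - P) * T * P) * Q = P * T * P * Q + T * ((1 - P) * Q) := by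
      noncomm_ring
    rw [k2, hQ1]
    noncomm_ring
  have claim2 : R - T = -(P * T * P * (1 - Q) + (1 - P) * T * P) := by
    rw [hRdef, k1]
    noncomm_ring
  -- memberships
  have h1M : (1 : H →L[ℂ] H) ∈ M₁ := one_mem M₁.toStarSubalgebra
  have h1P : (1 - P : H →L[ℂ] H) ∈ M₁ := sub_mem h1M hP
  have h1Q : (1 - Q : H →L[ℂ] H) ∈ M₁ := sub_mem h1M hQ
  have hPTP : P * T * P ∈ M₁ := mul_mem (mul_mem hP hT) hP
  have hT21 : (1 - P) * T * P ∈ M₁ := mul_mem (mul_mem h1P hT) hP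
  have hRM : R ∈ M₁ := by
    rw [hRdef]
    exact add_mem (add_mem (mul_mem hPTP (sub_mem hQ h1P))
      (mul_mem (mul_mem hP hT) h1P)) (mul_mem (mul_mem h1P hT) h1P)
  -- norms of projections
  have hQn : ‖Q‖ ≤ 1 := proj_norm_le_one hQproj
  have hPn : ‖P‖ ≤ 1 := proj_norm_le_one hPproj
  -- Part 1
  have part1 : ‖R‖ ≤ 1 + ε₁ := by
    rw [claim1]
    calc ‖T * Q - ((1 - P) * T * P) * Q‖ ≤ ‖T * Q‖ + ‖((1 - P) * T * P) * Q‖ :=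
          norm_sub_le _ _
      _ ≤ 1 + ε₁ := by
          have h1 : ‖T * Q‖ ≤ ‖T‖ * ‖Q‖ := norm_mul_le _ _
          have h2 : ‖T‖ * ‖Q‖ ≤ 1 := by nlinarith [norm_nonneg T, norm_nonneg Q]
          linarith [hQnorm]
  -- Part 2
  have hPTPn : ‖P * T * P‖ ≤ 1 := by
    have h1 : ‖P * T * P‖ ≤ ‖P * T‖ * ‖P‖ := norm_mul_le _ _
    have h2 : ‖P * T‖ ≤ ‖P‖ * ‖T‖ := norm_mul_le _ _
    nlinarith [norm_nonneg P, norm_nonneg T, norm_nonneg (P * T)]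
  have h1Qproj : star (1 - Q) * (1 - Q) = 1 - Q := by
    rw [star_sub, star_one, hQsa, sub_mul, mul_sub, mul_sub, one_mul, mul_one, hQQ]
    abel
  have hnorm2_1Q : norm2 τ (1 - Q) ≤ ε₁ / δ := by
    have h0 : (τ (star (1 - Q) * (1 - Q))).re = (τ (1 - Q)).re := by rw [h1Qproj]
    have h2 : norm2 τ (1 - Q) = Real.sqrt (τ (1 - Q)).re := by
      unfold norm2; rw [h0]
    rw [h2]
    have h3 : (τ (1 - Q)).re ≤ (ε₁ / δ) ^ 2 := by
      have : ε₁ ^ 2 / δ ^ 2 = (ε₁ / δ) ^ 2 := (div_pow ε₁ δ 2).symm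
      linarith [hQtr]
    calc Real.sqrt (τ (1 - Q)).re ≤ Real.sqrt ((ε₁ / δ) ^ 2) := Real.sqrt_le_sqrt h3
      _ = ε₁ / δ := Real.sqrt_sq (div_nonneg hε₁.le hδ.le)
  have part2 : norm2 τ (R - T) ≤ ε₁ / δ + δ := by
    rw [claim2, norm2_neg]
    have hA : norm2 τ (P * T * P * (1 - Q)) ≤ ε₁ / δ := by
      have h1 : norm2 τ (P * T * P * (1 - Q)) ≤ ‖P * T * P‖ * norm2 τ (1 - Q) :=
        norm2_mul_le hτ hPTP h1Q
      nlinarith [norm2_nonneg τ (1 - Q), norm_nonneg (P * T * P)]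
    calc norm2 τ (P * T * P * (1 - Q) + (1 - P) * T * P)
        ≤ norm2 τ (P * T * P * (1 - Q)) + norm2 τ ((1 - P) * T * P) :=
          norm2_add_le hτ (mul_mem hPTP h1Q) hT21
      _ ≤ ε₁ / δ + δ := by linarith [h21]
  -- Part 3
  have hc : (0:ℝ) < (1 + ε₁)⁻¹ := by positivity
  have hcle : (1 + ε₁)⁻¹ ≤ 1 := by
    rw [inv_le_one_iff₀]; right; linarith
  have part3a : ‖(1 + ε₁)⁻¹ • R‖ ≤ 1 := by
    rw [norm_smul, Real.norm_eq_abs, abs_of_pos hc]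
    calc (1 + ε₁)⁻¹ * ‖R‖ ≤ (1 + ε₁)⁻¹ * (1 + ε₁) := by
          exact mul_le_mul_of_nonneg_left part1 hc.le
      _ = 1 := by field_simp
  have hz : (1 - P) * P = 0 := by rw [sub_mul, one_mul, hPP, sub_self]
  have hstep : (Q - (1 - P)) * P = Q - (1 - P) := by
    calc (Q - (1 - P)) * P = Q * P - P + P * P := by noncomm_ring
      _ = (Q - (1 - P)) - P + P := by rw [hQP, hPP]
      _ = Q - (1 - P) := by abel
  have hRP : R * P = P * T * P * (Q - (1 - P)) := by
    calc R * P = P * T * P * ((Q - (1 - P)) * P) + P * T * ((1 - P) * P)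
          + (1 - P) * T * ((1 - P) * P) := by rw [hRdef]; simp only [add_mul, mul_assoc]
      _ = P * T * P * (Q - (1 - P)) := by rw [hstep, hz]; simp
  have hfix : R * P = P * R * P := by
    rw [hRP]
    have : P * R * P = P * (R * P) := by rw [mul_assoc]
    rw [this, hRP]
    calc P * T * P * (Q - (1 - P)) = (P * P) * T * P * (Q - (1 - P)) := by rw [hPP]
      _ = P * (P * T * P * (Q - (1 - P))) := by noncomm_ring
  have part3b : ((1 + ε₁)⁻¹ • R) * P = P * ((1 + ε₁)⁻¹ • R) * P := by
    rw [smul_mul_assoc, mul_smul_comm, smul_mul_assoc, hfix]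
  have part3c : norm2 τ ((1 + ε₁)⁻¹ • R - T) ≤ ε₁ + ε₁ / δ + δ := by
    set c : ℝ := (1 + ε₁)⁻¹ with hcdef
    have hdecomp : c • R - T = (((c - 1 : ℝ)) : ℂ) • R + (R - T) := by
      have h1 : c • R = ((c : ℝ) : ℂ) • R := (algebraMap_smul ℂ c R).symm
      rw [h1]
      push_cast
      module
    rw [hdecomp]
    have h2 : norm2 τ ((((c - 1 : ℝ)) : ℂ) • R) ≤ ε₁ := by
      rw [norm2_real_smul hτ]
      have h3 : |c - 1| = 1 - c := by
        rw [abs_of_nonpos (by linarith)]; ring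
      rw [h3]
      have h4 : norm2 τ R ≤ 1 + ε₁ := le_trans (norm2_le_norm hτ hRM) part1
      have h5 : (1 - c) * (1 + ε₁) = ε₁ := by
        rw [hcdef]; field_simp; ring
      nlinarith [norm2_nonneg τ R]
    calc norm2 τ ((((c - 1 : ℝ)) : ℂ) • R + (R - T))
        ≤ norm2 τ ((((c - 1 : ℝ)) : ℂ) • R) + norm2 τ (R - T) :=
          norm2_add_le hτ (vn_smul_mem hRM _) (sub_mem hRM hT)
      _ ≤ ε₁ + (ε₁ / δ + δ) := add_le_add h2 part2
      _ = ε₁ + ε₁ / δ + δ := by ring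
  exact ⟨part1, part2, part3a, part3b, part3c⟩
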